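/- Let I and J be nonempty disjoint subsets of {1,...,n+1}. Then the convex hull of the set of points {e_j - e_i : i ∈ I, j ∈ J} in R^{n+1} has dimension |I| + |J| - 2. -/
import Mathlib


/-- Let `I` and `J` be nonempty disjoint subsets of `{1,...,n+1}`. The convex hull of
the points `e_j - e_i` for `i ∈ I`, `j ∈ J` in `ℝ^{n+1}` has dimension
`|I| + |J| - 2` (dimension meaning the dimension of its affine hull, i.e. the rank of
its `vectorSpan`). -/
theorem dim_face_of_legendre_polytope (n : ℕ) (I J : Finset (Fin (n + 1)))
    (hI : I.Nonempty) (hJ : J.Nonempty) (hIJ : Disjoint I J) :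
    Module.finrank ℝ (vectorSpan ℝ (convexHull ℝ
        {p : Fin (n + 1) → ℝ | ∃ i ∈ I, ∃ j ∈ J,
          p = Pi.single j (1 : ℝ) - Pi.single i (1 : ℝ)})) =
      I.card + J.card - 2 := by
  obtain ⟨i0, hi0⟩ := hI
  obtain ⟨j0, hj0⟩ := hJ
  set S : Set (Fin (n + 1) → ℝ) := {p : Fin (n + 1) → ℝ | ∃ i ∈ I, ∃ j ∈ J,
          p = Pi.single j (1 : ℝ) - Pi.single i (1 : ℝ)} with hS
  set p0 : Fin (n + 1) → ℝ := Pi.single j0 1 - Pi.single i0 1 with hp0def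
  have hp0 : p0 ∈ S := ⟨i0, hi0, j0, hj0, rfl⟩
  set b : (↑(J.erase j0) ⊕ ↑(I.erase i0)) → (Fin (n + 1) → ℝ) :=
    Sum.elim (fun j => Pi.single (j : Fin (n + 1)) 1 - Pi.single j0 1)
             (fun i => Pi.single i0 1 - Pi.single (i : Fin (n + 1)) 1) with hb
  -- The vectorSpan of the convex hull equals the vectorSpan of S
  have hvs : vectorSpan ℝ (convexHull ℝ S) = vectorSpan ℝ S := by
    rw [← direction_affineSpan, affineSpan_convexHull, direction_affineSpan]
  have hvs2 : vectorSpan ℝ S = Submodule.span ℝ ((· -ᵥ p0) '' S) :=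
    vectorSpan_eq_span_vsub_set_right ℝ hp0
  have hspan : Submodule.span ℝ ((· -ᵥ p0) '' S) = Submodule.span ℝ (Set.range b) := by
    apply le_antisymm
    · rw [Submodule.span_le]
      rintro q ⟨p, ⟨i, hi, j, hj, rfl⟩, rfl⟩
      have hA : (Pi.single j 1 - Pi.single j0 1 : Fin (n + 1) → ℝ)
          ∈ Submodule.span ℝ (Set.range b) := by
        by_cases hjj : j = j0
        · subst hjj; simp
        · exact Submodule.subset_span ⟨Sum.inl ⟨j, Finset.mem_erase.2 ⟨hjj, hj⟩⟩, rfl⟩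
      have hB : (Pi.single i0 1 - Pi.single i 1 : Fin (n + 1) → ℝ)
          ∈ Submodule.span ℝ (Set.range b) := by
        by_cases hii : i = i0
        · subst hii; simp
        · exact Submodule.subset_span ⟨Sum.inr ⟨i, Finset.mem_erase.2 ⟨hii, hi⟩⟩, rfl⟩
      have heq : (Pi.single j 1 - Pi.single i 1 : Fin (n + 1) → ℝ) - p0
          = (Pi.single j 1 - Pi.single j0 1) + (Pi.single i0 1 - Pi.single i 1) := by
        rw [hp0def]; abel
      show (Pi.single j 1 - Pi.single i 1 : Fin (n + 1) → ℝ) -ᵥ p0 ∈ _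
      rw [vsub_eq_sub, heq]
      exact Submodule.add_mem _ hA hB
    · rw [Submodule.span_le]
      rintro q ⟨k, rfl⟩
      apply Submodule.subset_span
      rcases k with ⟨j, hj⟩ | ⟨i, hi⟩
      · refine ⟨Pi.single j 1 - Pi.single i0 1, ⟨i0, hi0, j, (Finset.mem_erase.1 hj).2, rfl⟩, ?_⟩
        show Pi.single (j : Fin (n+1)) 1 - Pi.single i0 1 -ᵥ p0 = _
        rw [vsub_eq_sub, hp0def, hb]; simp only [Sum.elim_inl]; abel
      · refine ⟨Pi.single j0 1 - Pi.single i 1, ⟨i, (Finset.mem_erase.1 hi).2, j0, hj0, rfl⟩, ?_⟩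
        show Pi.single j0 (1:ℝ) - Pi.single (i : Fin (n+1)) 1 -ᵥ p0 = _
        rw [vsub_eq_sub, hp0def, hb]; simp only [Sum.elim_inr]; abel
  -- linear independence of b
  have hli : LinearIndependent ℝ b := by
    rw [linearIndependent_iff']
    intro s g hg k hk
    have hval : ∀ x : Fin (n + 1), (∑ m ∈ s, g m • b m) x = 0 := by
      rw [hg]; intro x; rfl
    rcases k with ⟨j, hj⟩ | ⟨i, hi⟩
    · obtain ⟨hjj0, hjJ⟩ := Finset.mem_erase.1 hj
      have hz := hval j
      rw [Finset.sum_apply] at hz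
      have hsum : ∑ c ∈ s, (g c • b c) j = (g (Sum.inl ⟨j, hj⟩) • b (Sum.inl ⟨j, hj⟩)) j := by
        apply Finset.sum_eq_single_of_mem _ hk
        intro m hm hmk
        rcases m with ⟨j', hj'⟩ | ⟨i', hi'⟩
        · have hj'j : (j' : Fin (n + 1)) ≠ j := by
            intro h
            exact hmk (by congr 1; exact Subtype.ext h)
          simp [hb, Pi.single_apply, hj'j, Ne.symm hjj0]
        · have h1 : i0 ≠ j := fun h => Finset.disjoint_left.1 hIJ (h ▸ hi0) hjJ
          have h2 : (i' : Fin (n + 1)) ≠ j := fun h =>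
            Finset.disjoint_left.1 hIJ (h ▸ (Finset.mem_erase.1 hi').2) hjJ
          simp [hb, Pi.single_apply, h1, h2]
      have hbk : b (Sum.inl ⟨j, hj⟩) j = 1 := by
        simp [hb, Pi.single_apply, Ne.symm hjj0]
      calc g (Sum.inl ⟨j, hj⟩) = (g (Sum.inl ⟨j, hj⟩) • b (Sum.inl ⟨j, hj⟩)) j := by
            rw [Pi.smul_apply, hbk, smul_eq_mul, mul_one]
        _ = 0 := by rw [← hsum, hz]
    · obtain ⟨hii0, hiI⟩ := Finset.mem_erase.1 hi
      have hz := hval i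
      rw [Finset.sum_apply] at hz
      have hsum : ∑ c ∈ s, (g c • b c) i = (g (Sum.inr ⟨i, hi⟩) • b (Sum.inr ⟨i, hi⟩)) i := by
        apply Finset.sum_eq_single_of_mem _ hk
        intro m hm hmk
        rcases m with ⟨j', hj'⟩ | ⟨i', hi'⟩
        · have h1 : (j' : Fin (n + 1)) ≠ i := fun h =>
            Finset.disjoint_right.1 hIJ (h ▸ (Finset.mem_erase.1 hj').2) hiI
          have h2 : j0 ≠ i := fun h => Finset.disjoint_right.1 hIJ (h ▸ hj0) hiI
          simp [hb, Pi.single_apply, h1, h2]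
        · have hi'i : (i' : Fin (n + 1)) ≠ i := by
            intro h
            exact hmk (by congr 1; exact Subtype.ext h)
          have h3 : i0 ≠ i := Ne.symm hii0
          simp [hb, Pi.single_apply, hi'i, h3]
      have hbk : b (Sum.inr ⟨i, hi⟩) i = -1 := by
        have h3 : i0 ≠ i := Ne.symm hii0
        simp [hb, Pi.single_apply, h3]
      have h0 : (g (Sum.inr ⟨i, hi⟩) • b (Sum.inr ⟨i, hi⟩)) i = 0 := hsum ▸ hz
      rw [Pi.smul_apply, hbk, smul_eq_mul] at h0
      linarith
  rw [hvs, hvs2, hspan, finrank_span_eq_card hli]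
  have hIc : 1 ≤ I.card := Finset.card_pos.2 ⟨i0, hi0⟩
  have hJc : 1 ≤ J.card := Finset.card_pos.2 ⟨j0, hj0⟩
  simp only [Fintype.card_sum, Fintype.card_coe,
    Finset.card_erase_of_mem hj0, Finset.card_erase_of_mem hi0]
  omega
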